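/- For every L-sentence φ: SAPP ⊨ φ if and only if 𝒜* ⊨ φ, where 𝒜* is the L-structure with universe {(a,b) ∈ ℝ × ℝ : a ≠ 0 and b ≠ 0} and O interpreted by O((a,b),(c,d)) iff a·c = −1. -/

import Mathlib

open FirstOrder Language Structure BoundedFormula

/-- The relation symbols of the language `L`: a single binary relation `O`. -/
inductive PerpRel : ℕ → Type
  | o : PerpRel 2

/-- The first-order language with a single binary relation symbol `O`. -/
def L : Language := ⟨fun _ => Empty, PerpRel⟩
  deriving IsRelational

/-- The binary relation symbol `O` of `L`. -/
abbrev oSym : L.Relations 2 := .o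

/-- `O(xᵢ, xⱼ)` as a bounded formula. -/
def oBF {n : ℕ} (i j : Fin n) : L.BoundedFormula Empty n :=
  oSym.boundedFormula₂ (&i) (&j)

/-- Finite conjunction of a list of bounded formulas. -/
def andAll {n : ℕ} : List (L.BoundedFormula Empty n) → L.BoundedFormula Empty n
  | [] => ⊤
  | φ :: l => φ ⊓ andAll l

/-- λ₁ₙ : ∀y₁…∀yₙ∀s(O(s,y₁) ∧ … ∧ O(s,yₙ) → ∃t(t ≠ y₁ ∧ … ∧ t ≠ yₙ ∧ O(s,t))).
Variables: y₁,…,yₙ are de Bruijn indices 0,…,n-1, s is index n, t is index n+1. -/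
def lam1 (n : ℕ) : L.Sentence :=
  ((andAll ((List.finRange n).map fun i => oBF (Fin.last n) i.castSucc)).imp
    ((andAll ((List.finRange n).map fun i =>
        ∼((&(Fin.last (n + 1))) =' (&(i.castSucc.castSucc)))) ⊓
      oBF ((Fin.last n).castSucc) (Fin.last (n + 1))).ex)).alls

/-- λ₂ₙ : ∀y₁…∀yₙ∃s(¬O(s,y₁) ∧ … ∧ ¬O(s,yₙ)).
Variables: y₁,…,yₙ are de Bruijn indices 0,…,n-1, s is index n. -/
def lam2 (n : ℕ) : L.Sentence :=
  ((andAll ((List.finRange n).map fun i => ∼(oBF (Fin.last n) i.castSucc))).ex).alls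

/-- λ₃ : ∀x ¬O(x,x). -/
def lam3 : L.Sentence := (∼(oBF (0 : Fin 1) 0)).alls

/-- λ₄ : ∀x∀y(O(x,y) → O(y,x)). -/
def lam4 : L.Sentence := ((oBF (0 : Fin 2) 1).imp (oBF (1 : Fin 2) 0)).alls

/-- λ₅ : ∀x∃y O(x,y). -/
def lam5 : L.Sentence := ((oBF (0 : Fin 2) 1).ex).alls

/-- λ₆ : ∀x∀y∀z∀t(O(x,z) ∧ O(y,z) ∧ O(x,t) → O(y,t)). -/
def lam6 : L.Sentence :=
  ((oBF (0 : Fin 4) 2 ⊓ oBF (1 : Fin 4) 2 ⊓ oBF (0 : Fin 4) 3).imp (oBF (1 : Fin 4) 3)).alls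

/-- The theory SAPP. -/
def SAPP : L.Theory :=
  {φ | ∃ n, 1 ≤ n ∧ φ = lam1 n} ∪ {φ | ∃ n, 2 ≤ n ∧ φ = lam2 n} ∪ {lam3, lam4, lam5, lam6}

/-- The structure 𝒜*: pairs (a,b) of nonzero reals (coordinatizing the lines y = ax + b not
parallel to a coordinate axis and not through the origin), with O((a,b),(c,d)) iff a·c = −1. -/
abbrev AStar : Type := {p : ℝ × ℝ // p.1 ≠ 0 ∧ p.2 ≠ 0}

instance : L.Structure AStar where
  RelMap | .o => fun x => (x 0).val.1 * (x 1).val.1 = -1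

section Sem
variable {M : Type*} [L.Structure M]

/-- the binary relation -/
def oo (x y : M) : Prop := RelMap oSym ![x, y]

lemma realize_oBF {n : ℕ} (i j : Fin n) (v : Empty → M) (xs : Fin n → M) :
    (oBF i j).Realize v xs ↔ oo (xs i) (xs j) := by
  simp [oBF, oo, realize_rel₂, Term.realize]

lemma realize_andAll {n : ℕ} (l : List (L.BoundedFormula Empty n)) (v : Empty → M)
    (xs : Fin n → M) : (andAll l).Realize v xs ↔ ∀ φ ∈ l, φ.Realize v xs := by
  induction l with
  | nil => simp [andAll]
  | cons φ l ih => simp [andAll, ih]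

end Sem

section Spec
variable {M : Type*} [L.Structure M]

lemma lam1_spec (n : ℕ) :
    (M ⊨ lam1 n) ↔ ∀ (ys : Fin n → M) (s : M), (∀ i, oo s (ys i)) →
      ∃ t, (∀ i, t ≠ ys i) ∧ oo s t := by
  simp only [lam1, Sentence.Realize, realize_alls, realize_imp, realize_ex,
    realize_inf, realize_andAll, List.mem_map, List.mem_finRange, realize_oBF, realize_not,
    realize_bdEqual, Term.realize_var, Sum.elim_inr, forall_exists_index]
  constructor
  · intro h ys s hos
    obtain ⟨a, ha1, ha2⟩ := by
      refine h (Fin.snoc ys s) ?_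
      rintro φ i ⟨-, rfl⟩
      simpa [realize_oBF, realize_not, realize_bdEqual, Term.realize_var, Fin.snoc_castSucc, Fin.snoc_last] using hos i
    refine ⟨a, fun i => ?_, ?_⟩
    · have := ha1 _ i ⟨trivial, rfl⟩
      simpa [realize_oBF, realize_not, realize_bdEqual, Term.realize_var, Fin.snoc_castSucc, Fin.snoc_last] using this
    · simpa [realize_oBF, realize_not, realize_bdEqual, Term.realize_var, Fin.snoc_castSucc, Fin.snoc_last] using ha2
  · intro h xs hxs
    obtain ⟨t, ht1, ht2⟩ := h (fun i => xs i.castSucc) (xs (Fin.last n))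
      (fun i => by simpa [realize_oBF] using hxs _ i ⟨trivial, rfl⟩)
    refine ⟨t, ?_, ?_⟩
    · rintro φ i ⟨-, rfl⟩; simpa [realize_oBF, realize_not, realize_bdEqual, Term.realize_var, Fin.snoc_castSucc, Fin.snoc_last] using ht1 i
    · simpa [realize_oBF, realize_not, realize_bdEqual, Term.realize_var, Fin.snoc_castSucc, Fin.snoc_last] using ht2

lemma lam2_spec (n : ℕ) :
    (M ⊨ lam2 n) ↔ ∀ ys : Fin n → M, ∃ s, ∀ i, ¬ oo s (ys i) := by
  simp only [lam2, Sentence.Realize, realize_alls, realize_ex,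
    realize_andAll, List.mem_map, List.mem_finRange, realize_oBF, realize_not,
    forall_exists_index]
  constructor
  · intro h ys
    obtain ⟨s, hs⟩ := h ys
    exact ⟨s, fun i => by simpa [realize_oBF, realize_not, realize_bdEqual, Term.realize_var, Fin.snoc_castSucc, Fin.snoc_last] using hs _ i ⟨trivial, rfl⟩⟩
  · intro h xs
    obtain ⟨s, hs⟩ := h xs
    refine ⟨s, ?_⟩; rintro φ i ⟨-, rfl⟩; simpa [realize_oBF, realize_not, realize_bdEqual, Term.realize_var, Fin.snoc_castSucc, Fin.snoc_last] using hs i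

lemma lam3_spec : (M ⊨ lam3) ↔ ∀ x : M, ¬ oo x x := by
  simp only [lam3, Sentence.Realize, realize_alls, realize_not, realize_oBF]
  constructor
  · intro h x; simpa using h ![x]
  · intro h xs; exact h _

lemma lam4_spec : (M ⊨ lam4) ↔ ∀ x y : M, oo x y → oo y x := by
  simp only [lam4, Sentence.Realize, realize_alls, realize_imp, realize_oBF]
  constructor
  · intro h x y; simpa using h ![x, y]
  · intro h xs; exact h _ _

lemma lam5_spec : (M ⊨ lam5) ↔ ∀ x : M, ∃ y, oo x y := by
  simp only [lam5, Sentence.Realize, realize_alls, realize_ex, realize_oBF]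
  constructor
  · intro h x
    obtain ⟨a, ha⟩ := h ![x]
    exact ⟨a, by simpa [Fin.snoc] using ha⟩
  · intro h xs
    obtain ⟨y, hy⟩ := h (xs 0)
    exact ⟨y, by simpa [Fin.snoc] using hy⟩

lemma lam6_spec : (M ⊨ lam6) ↔ ∀ x y z t : M, oo x z → oo y z → oo x t → oo y t := by
  simp only [lam6, Sentence.Realize, realize_alls, realize_imp, realize_inf,
    realize_oBF]
  constructor
  · intro h x y z t h1 h2 h3
    simpa using h ![x, y, z, t] (by simp; exact ⟨⟨h1, h2⟩, h3⟩)
  · intro h xs hxs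
    exact h _ _ _ _ hxs.1.1 hxs.1.2 hxs.2

end Spec

section Model
set_option linter.unusedSectionVars false
variable {M : Type*} [L.Structure M] [SAPP.Model M]

lemma sapp1 (n : ℕ) (hn : 1 ≤ n) : ∀ (ys : Fin n → M) (s : M), (∀ i, oo s (ys i)) →
    ∃ t, (∀ i, t ≠ ys i) ∧ oo s t :=
  (lam1_spec n).1 (SAPP.realize_sentence_of_mem (Or.inl (Or.inl ⟨n, hn, rfl⟩)))

lemma sapp2 (n : ℕ) (hn : 2 ≤ n) : ∀ ys : Fin n → M, ∃ s, ∀ i, ¬ oo s (ys i) :=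
  (lam2_spec n).1 (SAPP.realize_sentence_of_mem (Or.inl (Or.inr ⟨n, hn, rfl⟩)))

lemma oo_irrefl (x : M) : ¬ oo x x :=
  lam3_spec.1 (SAPP.realize_sentence_of_mem (Or.inr (Or.inl rfl))) x

lemma oo_symm {x y : M} (h : oo x y) : oo y x :=
  lam4_spec.1 (SAPP.realize_sentence_of_mem (Or.inr (Or.inr (Or.inl rfl)))) x y h

lemma oo_exists (x : M) : ∃ y, oo x y :=
  lam5_spec.1 (SAPP.realize_sentence_of_mem (Or.inr (Or.inr (Or.inr (Or.inl rfl))))) x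

lemma oo_trans6 {x y z t : M} (h1 : oo x z) (h2 : oo y z) (h3 : oo x t) : oo y t :=
  lam6_spec.1 (SAPP.realize_sentence_of_mem (Or.inr (Or.inr (Or.inr (Or.inr rfl)))))
    x y z t h1 h2 h3

/-- Equivalence: same `oo`-neighborhoods. -/
def EE (x y : M) : Prop := ∀ z, oo x z ↔ oo y z

lemma EE.refl (x : M) : EE x x := fun _ => Iff.rfl
lemma EE.symm {x y : M} (h : EE x y) : EE y x := fun z => (h z).symm
lemma EE.trans {x y z : M} (h1 : EE x y) (h2 : EE y z) : EE x z := fun w => (h1 w).trans (h2 w)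

lemma EE_of_common {s u v : M} (h1 : oo s u) (h2 : oo s v) : EE u v := by
  intro w
  constructor
  · intro hw; exact oo_trans6 (oo_symm h1) (oo_symm h2) hw
  · intro hw; exact oo_trans6 (oo_symm h2) (oo_symm h1) hw

lemma oo_of_EE {x y z : M} (h : EE x y) (hx : oo x z) : oo y z := (h z).1 hx

/-- In a model of SAPP, one can find a neighbor of `s` avoiding any finite list. -/
lemma neighbor_avoid (s : M) (l : List M) : ∃ t, t ∉ l ∧ oo s t := by
  classical
  obtain ⟨y₀, hy₀⟩ := oo_exists s
  let l' : List M := y₀ :: l.filter (fun y => oo s y)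
  have hlen : 1 ≤ l'.length := by simp [l']
  have hall : ∀ i, oo s (l'.get i) := by
    intro i
    have : l'.get i ∈ l' := by simpa using List.get_mem l' i.1 i.2
    simp only [l', List.mem_cons, List.mem_filter] at this
    rcases this with h | ⟨-, h⟩
    · rw [h]; exact hy₀
    · simpa using h
  obtain ⟨t, ht1, ht2⟩ := sapp1 l'.length hlen (fun i => l'.get i) s hall
  refine ⟨t, ?_, ht2⟩
  intro htl
  have : t ∈ l' := by
    simp only [l', List.mem_cons, List.mem_filter]
    exact Or.inr ⟨htl, by simp [ht2]⟩
  obtain ⟨i, hi⟩ := List.get_of_mem this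
  exact ht1 i hi.symm

/-- One can find an element equivalent to `x` avoiding any finite list. -/
lemma class_avoid (x : M) (l : List M) : ∃ t, t ∉ l ∧ EE t x := by
  obtain ⟨z, hz⟩ := oo_exists x
  obtain ⟨t, ht1, ht2⟩ := neighbor_avoid z l
  exact ⟨t, ht1, EE_of_common ht2 (oo_symm hz)⟩

/-- One can find an element not related to anything in a finite list. -/
lemma unrelated_avoid [Nonempty M] (l : List M) : ∃ s, ∀ y ∈ l, ¬ oo s y := by
  obtain ⟨m⟩ := ‹Nonempty M›
  let l' : List M := m :: m :: l
  have hlen : 2 ≤ l'.length := by simp [l']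
  obtain ⟨s, hs⟩ := sapp2 l'.length hlen (fun i => l'.get i)
  refine ⟨s, fun y hy => ?_⟩
  have : y ∈ l' := by simp [l', hy]
  obtain ⟨i, hi⟩ := List.get_of_mem this
  rw [← hi]
  exact hs i

end Model

section BackForth
set_option linter.unusedSectionVars false
variable {M : Type*} {N : Type*} [L.Structure M] [L.Structure N]

/-- Two tuples are matched if they have the same equality, `oo` and `EE` patterns. -/
def Matched {n : ℕ} (p : Fin n → M) (q : Fin n → N) : Prop :=
  ∀ i j, (p i = p j ↔ q i = q j) ∧ (oo (p i) (p j) ↔ oo (q i) (q j)) ∧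
    (EE (p i) (p j) ↔ EE (q i) (q j))

lemma Matched.symm {n : ℕ} {p : Fin n → M} {q : Fin n → N} (h : Matched p q) : Matched q p :=
  fun i j => ⟨(h i j).1.symm, (h i j).2.1.symm, (h i j).2.2.symm⟩

/-- The one-point extension condition. -/
def ExtCond {n : ℕ} (p : Fin n → M) (q : Fin n → N) (a : M) (b : N) : Prop :=
  ∀ j, (a = p j ↔ b = q j) ∧ (oo a (p j) ↔ oo b (q j)) ∧ (EE a (p j) ↔ EE b (q j))

variable [SAPP.Model M] [SAPP.Model N]

lemma Matched.snoc {n : ℕ} {p : Fin n → M} {q : Fin n → N} (h : Matched p q) {a : M} {b : N}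
    (hab : ExtCond p q a b) : Matched (Fin.snoc p a) (Fin.snoc q b) := by
  intro i j
  refine Fin.lastCases ?_ (fun i' => ?_) i <;> [skip; skip] <;>
    [refine Fin.lastCases ?_ (fun j' => ?_) j; refine Fin.lastCases ?_ (fun j' => ?_) j]
  · simp only [Fin.snoc_last]
    exact ⟨by simp, ⟨fun h' => absurd h' (oo_irrefl a), fun h' => absurd h' (oo_irrefl b)⟩,
      ⟨fun _ => EE.refl b, fun _ => EE.refl a⟩⟩
  · simp only [Fin.snoc_last, Fin.snoc_castSucc]
    exact hab j'
  · simp only [Fin.snoc_last, Fin.snoc_castSucc]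
    obtain ⟨h1, h2, h3⟩ := hab i'
    refine ⟨by rw [eq_comm, h1, eq_comm], ?_, ?_⟩
    · exact ⟨fun h' => oo_symm (h2.1 (oo_symm h')),
        fun h' => oo_symm (h2.2 (oo_symm h'))⟩
    · exact ⟨fun h' => (h3.1 h'.symm).symm, fun h' => (h3.2 h'.symm).symm⟩
  · simp only [Fin.snoc_castSucc]
    exact h i' j'

lemma exists_ext [Nonempty N] {n : ℕ} {p : Fin n → M} {q : Fin n → N} (h : Matched p q)
    (a : M) : ∃ b : N, ExtCond p q a b := by
  classical
  by_cases hA : ∃ i, a = p i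
  · obtain ⟨i, rfl⟩ := hA
    refine ⟨q i, fun j => ?_⟩
    exact ⟨(h i j).1, (h i j).2.1, (h i j).2.2⟩
  · push_neg at hA
    by_cases hB1 : ∃ j, EE a (p j)
    · obtain ⟨j, hj⟩ := hB1
      obtain ⟨b, hb1, hb2⟩ := class_avoid (q j) (List.ofFn q)
      refine ⟨b, fun k => ?_⟩
      refine ⟨⟨fun h' => absurd h' (hA k), fun h' => absurd (h' ▸ List.mem_ofFn.2 ⟨k, rfl⟩ :
          b ∈ List.ofFn q) hb1⟩, ?_, ?_⟩
      · constructor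
        · intro h'
          exact oo_of_EE hb2.symm ((h j k).2.1.1 (oo_of_EE hj h'))
        · intro h'
          exact oo_of_EE hj.symm ((h j k).2.1.2 (oo_of_EE hb2 h'))
      · constructor
        · intro h'
          exact hb2.trans ((h j k).2.2.1 (hj.symm.trans h'))
        · intro h'
          exact hj.trans ((h j k).2.2.2 (hb2.symm.trans h'))
    · push_neg at hB1
      by_cases hB2 : ∃ j, oo a (p j)
      · obtain ⟨j, hj⟩ := hB2
        obtain ⟨b, hb1, hb2⟩ := neighbor_avoid (q j) (List.ofFn q)
        have hbj : oo b (q j) := oo_symm hb2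
        refine ⟨b, fun k => ?_⟩
        refine ⟨⟨fun h' => absurd h' (hA k), fun h' => absurd (h' ▸ List.mem_ofFn.2 ⟨k, rfl⟩ :
            b ∈ List.ofFn q) hb1⟩, ?_, ?_⟩
        · have hM : oo a (p k) ↔ EE (p k) (p j) := by
            constructor
            · intro h'; exact EE_of_common h' hj
            · intro h'; exact oo_symm (oo_of_EE h'.symm (oo_symm hj))
          have hN : oo b (q k) ↔ EE (q k) (q j) := by
            constructor
            · intro h'; exact EE_of_common h' hbj
            · intro h'; exact oo_symm (oo_of_EE h'.symm (oo_symm hbj))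
          rw [hM, hN]; exact (h k j).2.2
        · constructor
          · intro h'; exact absurd h' (hB1 k)
          · intro h'
            have h1 : oo (q k) (q j) := oo_of_EE h' hbj
            have h2 : oo (p k) (p j) := (h k j).2.1.2 h1
            exact absurd (EE_of_common (oo_symm hj) (oo_symm h2)) (hB1 k)
      · push_neg at hB2
        choose z hz using fun k => oo_exists (q k)
        obtain ⟨b, hb⟩ := unrelated_avoid (List.ofFn q ++ List.ofFn z)
        have hbq : ∀ k, ¬ oo b (q k) := fun k =>
          hb _ (List.mem_append_left _ (List.mem_ofFn.2 ⟨k, rfl⟩))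
        have hbz : ∀ k, ¬ oo b (z k) := fun k =>
          hb _ (List.mem_append_right _ (List.mem_ofFn.2 ⟨k, rfl⟩))
        refine ⟨b, fun k => ?_⟩
        refine ⟨⟨fun h' => absurd h' (hA k), fun h' => absurd (h' ▸ hz k) (hbz k)⟩, ?_, ?_⟩
        · exact ⟨fun h' => absurd h' (hB2 k), fun h' => absurd h' (hbq k)⟩
        · refine ⟨fun h' => absurd h' (hB1 k), fun h' => ?_⟩
          exact absurd ((h' (z k)).2 (hz k)) (hbz k)

end BackForth

section Transfer
set_option linter.unusedSectionVars false
variable {M : Type*} {N : Type*} [L.Structure M] [L.Structure N]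

lemma term_eq_var {n : ℕ} (t : L.Term (Empty ⊕ Fin n)) : ∃ i, t = Term.var (Sum.inr i) := by
  cases t with
  | var x =>
    cases x with
    | inl e => exact e.elim
    | inr i => exact ⟨i, rfl⟩
  | func f ts => exact Empty.elim f

lemma relMap_oo (v : Fin 2 → M) : RelMap oSym v ↔ oo (v 0) (v 1) := by
  have : ![v 0, v 1] = v := by
    funext i; fin_cases i <;> rfl
  rw [oo, this]

variable [SAPP.Model M] [SAPP.Model N] [Nonempty M] [Nonempty N]

lemma realize_transfer : ∀ {n : ℕ} (φ : L.BoundedFormula Empty n) (v : Empty → M)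
    (w : Empty → N) (p : Fin n → M) (q : Fin n → N), Matched p q →
    (φ.Realize v p ↔ φ.Realize w q) := by
  intro n φ
  induction φ with
  | falsum => intro v w p q _; simp [BoundedFormula.Realize]
  | equal t₁ t₂ =>
    intro v w p q h
    obtain ⟨i, rfl⟩ := term_eq_var t₁
    obtain ⟨j, rfl⟩ := term_eq_var t₂
    simpa [BoundedFormula.Realize, Term.realize] using (h i j).1
  | @rel n l R ts =>
    intro v w p q h
    cases R
    obtain ⟨i, hi⟩ := term_eq_var (ts 0)
    obtain ⟨j, hj⟩ := term_eq_var (ts 1)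
    have : BoundedFormula.Realize (BoundedFormula.rel (n := n) oSym ts) v p ↔
        oo (p i) (p j) := by
      rw [show BoundedFormula.Realize (BoundedFormula.rel (n := n) oSym ts) v p =
        RelMap oSym fun k => Term.realize (Sum.elim v p) (ts k) from rfl, relMap_oo]
      simp [hi, hj, Term.realize]
    rw [this]
    have : BoundedFormula.Realize (BoundedFormula.rel (n := n) oSym ts) w q ↔
        oo (q i) (q j) := by
      rw [show BoundedFormula.Realize (BoundedFormula.rel (n := n) oSym ts) w q =
        RelMap oSym fun k => Term.realize (Sum.elim w q) (ts k) from rfl, relMap_oo]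
      simp [hi, hj, Term.realize]
    rw [this]
    exact (h i j).2.1
  | imp f g ihf ihg =>
    intro v w p q h
    simp only [realize_imp]
    rw [ihf v w p q h, ihg v w p q h]
  | all f ih =>
    intro v w p q h
    simp only [realize_all]
    constructor
    · intro hM b
      obtain ⟨a, ha⟩ := exists_ext h.symm b
      exact (ih v w _ _ ((h.symm.snoc ha).symm)).1 (hM a)
    · intro hN a
      obtain ⟨b, hb⟩ := exists_ext h a
      exact (ih v w _ _ (h.snoc hb)).2 (hN b)

lemma sentence_transfer (φ : L.Sentence) : M ⊨ φ ↔ N ⊨ φ := by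
  have h : Matched (default : Fin 0 → M) (default : Fin 0 → N) := fun i _ => i.elim0
  exact realize_transfer φ default default default default h

end Transfer

instance : Nonempty AStar := ⟨⟨(1, 1), one_ne_zero, one_ne_zero⟩⟩

lemma ooA (x y : AStar) : oo x y ↔ x.val.1 * y.val.1 = -1 := by
  rw [oo]
  show (![x, y] 0).val.1 * (![x, y] 1).val.1 = -1 ↔ _
  simp

instance astar_model : SAPP.Model AStar := by
  constructor
  rintro φ ((⟨n, hn, rfl⟩ | ⟨n, hn, rfl⟩) | (rfl | rfl | rfl | rfl))
  · -- lam1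
    rw [lam1_spec]
    intro ys s hos
    classical
    obtain ⟨c, hc⟩ := Infinite.exists_notMem_finset
      (insert (0 : ℝ) (Finset.image (fun i => (ys i).val.2) Finset.univ))
    simp only [Finset.mem_insert, Finset.mem_image, Finset.mem_univ, true_and, not_or,
      not_exists] at hc
    have hs1 : s.val.1 ≠ 0 := s.2.1
    refine ⟨⟨(-s.val.1⁻¹, c), by simpa using hs1, hc.1⟩, ?_, ?_⟩
    · intro i h
      apply hc.2 i
      rw [← h]
    · rw [ooA]
      simp [hs1]
  · -- lam2
    rw [lam2_spec]
    intro ys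
    classical
    obtain ⟨a, ha⟩ := Infinite.exists_notMem_finset
      (insert (0 : ℝ) (Finset.image (fun i => -((ys i).val.1)⁻¹) Finset.univ))
    simp only [Finset.mem_insert, Finset.mem_image, Finset.mem_univ, true_and, not_or,
      not_exists] at ha
    refine ⟨⟨(a, 1), ha.1, one_ne_zero⟩, ?_⟩
    intro i h
    rw [ooA] at h
    apply ha.2 i
    have hyi : (ys i).val.1 ≠ 0 := (ys i).2.1
    field_simp
    linarith [h]
  · -- lam3
    rw [lam3_spec]
    intro x h
    rw [ooA] at h
    nlinarith [mul_self_nonneg x.val.1]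
  · -- lam4
    rw [lam4_spec]
    intro x y h
    rw [ooA] at h ⊢
    linarith [h, mul_comm x.val.1 y.val.1]
  · -- lam5
    rw [lam5_spec]
    intro x
    have hx : x.val.1 ≠ 0 := x.2.1
    refine ⟨⟨(-x.val.1⁻¹, 1), by simpa using hx, one_ne_zero⟩, ?_⟩
    rw [ooA]; simp [hx]
  · -- lam6
    rw [lam6_spec]
    intro x y z t h1 h2 h3
    rw [ooA] at h1 h2 h3 ⊢
    have hz : z.val.1 ≠ 0 := z.2.1
    have hxy : x.val.1 = y.val.1 := by
      have := mul_right_cancel₀ hz (h1.trans h2.symm)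
      exact this
    rw [← hxy]; exact h3


/-- an L-sentence is a logical consequence of SAPP iff it holds in 𝒜*. -/
theorem statement_13 (φ : L.Sentence) : SAPP ⊨ᵇ φ ↔ AStar ⊨ φ := by
  constructor
  · intro h
    exact h.realize_sentence AStar
  · intro h
    intro Mt v xs
    exact (realize_transfer φ v (default : Empty → AStar) xs (default : Fin 0 → AStar)
      (fun i _ => i.elim0)).2 h
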